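/- Let m > 0, let V, Q : ℝ × ℝ → ℝ, and let ρ, S, Ŝ : ℝ × ℝ → ℝ be twice continuously differentiable with ρ > 0 everywhere. Suppose both S and Ŝ satisfy the quantum Hamilton–Jacobi equation with the same V and Q, i.e. ∂ₜS + (1/(2m))·(∂ₓS)² + V + Q = 0 and ∂ₜŜ + (1/(2m))·(∂ₓŜ)² + V + Q = 0, and that ρ satisfies the continuity equation with both: ∂ₜρ + (1/m)·∂ₓ(ρ·∂ₓS) = 0 and ∂ₜρ + (1/m)·∂ₓ(ρ·∂ₓŜ) = 0. Then: (i) ∂ₓ[ρ·(∂ₓŜ − ∂ₓS)] = 0 everywhere, so G₋(t) := (1/m)·ρ(x,t)·(∂ₓŜ(x,t) − ∂ₓS(x,t)) is independent of x; and (ii) setting G₊(x,t) := (1/m)·ρ·(∂ₓŜ + ∂ₓS), one has for all (x,t): ∂ₜŜ − ∂ₜS = −(m/(2·ρ²))·G₋(t)·G₊(x,t). -/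

import Mathlib

private lemma partial_x_contDiff {f : ℝ × ℝ → ℝ} (hf : ContDiff ℝ 2 f) (t : ℝ) :
    ContDiff ℝ 2 (fun z : ℝ => f (z, t)) :=
  hf.comp (contDiff_id.prodMk contDiff_const)

private lemma deriv_diffble {f : ℝ × ℝ → ℝ} (hf : ContDiff ℝ 2 f) (t : ℝ) :
    Differentiable ℝ (deriv (fun z : ℝ => f (z, t))) := by
  have h2 : ContDiff ℝ ((1 : WithTop ℕ∞) + 1) (fun z : ℝ => f (z, t)) :=
    (partial_x_contDiff hf t).of_le (by norm_num)
  have := (contDiff_succ_iff_deriv.mp h2).2.2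
  exact this.differentiable one_ne_zero

/-- Equations (9.7)–(9.8) of Corollary 9.2 of the paper: two phases `S`, `Ŝ` compatible
with the same `ρ`, `V`, `Q` via the quantum Hamilton–Jacobi and continuity equations
satisfy `∂ₓ[ρ(∂ₓŜ − ∂ₓS)] = 0` (so `G₋` is a function of `t` alone) and
`∂ₜŜ − ∂ₜS = −(m/(2ρ²))·G₋·G₊`. -/
theorem two_phases_same_density
    (m : ℝ) (hm : 0 < m)
    (V Q : ℝ × ℝ → ℝ)
    (ρ S Shat : ℝ × ℝ → ℝ)
    (hρ : ContDiff ℝ 2 ρ) (hS : ContDiff ℝ 2 S) (hShat : ContDiff ℝ 2 Shat)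
    (hρpos : ∀ p : ℝ × ℝ, 0 < ρ p)
    (hHJ : ∀ x t : ℝ,
      deriv (fun s => S (x, s)) t + (1 / (2 * m)) * (deriv (fun y => S (y, t)) x) ^ 2
        + V (x, t) + Q (x, t) = 0)
    (hHJhat : ∀ x t : ℝ,
      deriv (fun s => Shat (x, s)) t + (1 / (2 * m)) * (deriv (fun y => Shat (y, t)) x) ^ 2
        + V (x, t) + Q (x, t) = 0)
    (hCont : ∀ x t : ℝ,
      deriv (fun s => ρ (x, s)) t
        + (1 / m) * deriv (fun y => ρ (y, t) * deriv (fun z => S (z, t)) y) x = 0)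
    (hConthat : ∀ x t : ℝ,
      deriv (fun s => ρ (x, s)) t
        + (1 / m) * deriv (fun y => ρ (y, t) * deriv (fun z => Shat (z, t)) y) x = 0) :
    (∀ x t : ℝ,
      deriv (fun y => ρ (y, t) * (deriv (fun z => Shat (z, t)) y - deriv (fun z => S (z, t)) y)) x
        = 0)
    ∧ (∀ x₁ x₂ t : ℝ,
        (1 / m) * ρ (x₁, t) * (deriv (fun z => Shat (z, t)) x₁ - deriv (fun z => S (z, t)) x₁)
          = (1 / m) * ρ (x₂, t) * (deriv (fun z => Shat (z, t)) x₂ - deriv (fun z => S (z, t)) x₂))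
    ∧ (∀ x t : ℝ,
        deriv (fun s => Shat (x, s)) t - deriv (fun s => S (x, s)) t
          = -(m / (2 * (ρ (x, t)) ^ 2))
              * ((1 / m) * ρ (0, t) * (deriv (fun z => Shat (z, t)) 0 - deriv (fun z => S (z, t)) 0))
              * ((1 / m) * ρ (x, t) * (deriv (fun z => Shat (z, t)) x + deriv (fun z => S (z, t)) x))) := by
  have hm' : m ≠ 0 := ne_of_gt hm
  have hρd : ∀ t : ℝ, Differentiable ℝ (fun y : ℝ => ρ (y, t)) := fun t =>
    (partial_x_contDiff hρ t).differentiable (by norm_num)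
  have hfd : ∀ t : ℝ, Differentiable ℝ
      (fun y : ℝ => ρ (y, t) * deriv (fun z => S (z, t)) y) := fun t =>
    (hρd t).mul (deriv_diffble hS t)
  have hgd : ∀ t : ℝ, Differentiable ℝ
      (fun y : ℝ => ρ (y, t) * deriv (fun z => Shat (z, t)) y) := fun t =>
    (hρd t).mul (deriv_diffble hShat t)
  -- Part (i)
  have part1 : ∀ x t : ℝ,
      deriv (fun y => ρ (y, t) * (deriv (fun z => Shat (z, t)) y - deriv (fun z => S (z, t)) y)) x
        = 0 := by
    intro x t
    have heq : (fun y => ρ (y, t) * (deriv (fun z => Shat (z, t)) y - deriv (fun z => S (z, t)) y))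
        = fun y => (ρ (y, t) * deriv (fun z => Shat (z, t)) y)
            - (ρ (y, t) * deriv (fun z => S (z, t)) y) := by
      funext y; ring
    rw [heq, deriv_fun_sub ((hgd t).differentiableAt) ((hfd t).differentiableAt)]
    have h1 := hCont x t
    have h2 := hConthat x t
    have : (1 / m) * deriv (fun y => ρ (y, t) * deriv (fun z => Shat (z, t)) y) x
        = (1 / m) * deriv (fun y => ρ (y, t) * deriv (fun z => S (z, t)) y) x := by
      linarith
    have hm'' : (1 : ℝ) / m ≠ 0 := by positivity
    have := mul_left_cancel₀ hm'' this
    linarith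
  have part2 : ∀ x₁ x₂ t : ℝ,
      (1 / m) * ρ (x₁, t) * (deriv (fun z => Shat (z, t)) x₁ - deriv (fun z => S (z, t)) x₁)
        = (1 / m) * ρ (x₂, t) * (deriv (fun z => Shat (z, t)) x₂ - deriv (fun z => S (z, t)) x₂) := by
    intro x₁ x₂ t
    have hdiff : Differentiable ℝ
        (fun y => ρ (y, t) * (deriv (fun z => Shat (z, t)) y - deriv (fun z => S (z, t)) y)) :=
      (hρd t).mul ((deriv_diffble hShat t).sub (deriv_diffble hS t))
    have hc := is_const_of_deriv_eq_zero hdiff (fun x => part1 x t) x₁ x₂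
    rw [mul_assoc, mul_assoc, hc]
  refine ⟨part1, part2, ?_⟩
  intro x t
  have h1 := hHJ x t
  have h2 := hHJhat x t
  have hc := part2 0 x t
  rw [hc]
  have hρx : ρ (x, t) ≠ 0 := ne_of_gt (hρpos (x, t))
  set a := deriv (fun z => Shat (z, t)) x
  set b := deriv (fun z => S (z, t)) x
  have hdt : deriv (fun s => Shat (x, s)) t - deriv (fun s => S (x, s)) t
      = (1 / (2 * m)) * (b ^ 2 - a ^ 2) := by linarith
  rw [hdt]
  field_simp
  ring
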